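/- Canonical truth lemma for atoms: let Γ be a maximally L′_C-consistent set of L′_C formulas, [X⃗:=x⃗] an assignment, Y a variable and y ∈ R(Y). Then [X⃗:=x⃗]Y=y ∈ Γ if and only if the canonical model ⟨F^Γ, A^Γ⟩ satisfies [X⃗:=x⃗]Y=y, i.e., if and only if the valuation obtained by intervening with [X⃗:=x⃗] on ⟨F^Γ, A^Γ⟩ assigns y to Y. -/

import Mathlib

open Classical

/-- A finite signature: variables sorted into exogenous and endogenous, each with a
finite nonempty range of values. -/
structure Sig : Type 1 where
  Var : Type
  exo : Var → Prop
  Val : Var → Type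
  [decEqVar : DecidableEq Var]
  [finVar : Fintype Var]
  [neVar : Nonempty Var]
  [decEqVal : ∀ X : Var, DecidableEq (Val X)]
  [finVal : ∀ X : Var, Fintype (Val X)]
  [neVal : ∀ X : Var, Nonempty (Val X)]

attribute [instance] Sig.decEqVar Sig.finVar Sig.neVar Sig.decEqVal Sig.finVal Sig.neVal

variable {S : Sig}

/-- A valuation: a value for each variable. -/
abbrev Env (S : Sig) : Type := ∀ X : S.Var, S.Val X

instance : Nonempty (Env S) := ⟨fun X => Classical.arbitrary (S.Val X)⟩

/-- Values for all variables other than `V`. -/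
abbrev Others (S : Sig) (V : S.Var) : Type := ∀ X : {X : S.Var // X ≠ V}, S.Val X.val

/-- The restriction of a valuation to the variables other than `V`. -/
def Env.restrict (A : Env S) (V : S.Var) : Others S V := fun X => A X.val

/-- A family of structural functions (only the components at endogenous variables
are meaningful). -/
abbrev StructFuns (S : Sig) : Type := ∀ V : S.Var, Others S V → S.Val V

/-- A valuation complies with the structural functions: the value of each endogenous
variable is obtained by applying its structural function to the values of all
other variables. -/
def Complies (F : StructFuns S) (A : Env S) : Prop :=
  ∀ V : S.Var, ¬ S.exo V → A V = F V (A.restrict V)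

/-- The endogenous variable `V` is directly causally affected by `X` under `F`. -/
def DirAff (F : StructFuns S) (X V : S.Var) : Prop :=
  ¬ S.exo V ∧ ∃ (h : X ≠ V) (g : Others S V) (x₁ x₂ : S.Val X),
    x₁ ≠ x₂ ∧
      F V (Function.update g ⟨X, h⟩ x₁) ≠ F V (Function.update g ⟨X, h⟩ x₂)

/-- `F` is recursive: the transitive closure of the direct causal dependence
relation is asymmetric (transitivity is automatic for `Relation.TransGen`). -/
def RecursiveF (F : StructFuns S) : Prop :=
  ∀ a b : S.Var, Relation.TransGen (DirAff F) a b → ¬ Relation.TransGen (DirAff F) b a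

/-- An assignment of values to a set of pairwise distinct variables. -/
abbrev Intervention (S : Sig) : Type := ∀ X : S.Var, Option (S.Val X)

/-- The empty assignment. -/
def iEmpty (S : Sig) : Intervention S := fun _ => none

/-- Extend an assignment by additionally setting `Y` to `y` (overriding). -/
def iUpd (I : Intervention S) (Y : S.Var) (y : S.Val Y) : Intervention S :=
  Function.update I Y (some y)

/-- Combine assignments, the second overriding the first:  `[X⃗ := x⃗, Y⃗ := y⃗]`. -/
def icomp (I J : Intervention S) : Intervention S := fun W =>
  match J W with
  | some v => some v
  | none => I W

/-- The intervened family of structural functions: intervened variables get the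
constant function returning the assigned value; the rest are unchanged. -/
def intF (F : StructFuns S) (I : Intervention S) : StructFuns S :=
  fun V g => (I V).getD (F V g)

/-- `A'` is the result of intervening with `I` on the valuation `A` (w.r.t. `F`):
exogenous intervened variables get the assigned value, exogenous non-intervened
variables keep their value, and each endogenous variable complies with its new
structural function. -/
def IntervenedVal (F : StructFuns S) (A : Env S) (I : Intervention S) (A' : Env S) : Prop :=
  (∀ X : S.Var, S.exo X → ∀ v : S.Val X, I X = some v → A' X = v) ∧
  (∀ X : S.Var, S.exo X → I X = none → A' X = A X) ∧
  (∀ V : S.Var, ¬ S.exo V → A' V = intF F I V (A'.restrict V))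

/-- The intervened valuation (unique when `F` is recursive). -/
noncomputable def intVal (F : StructFuns S) (A : Env S) (I : Intervention S) : Env S :=
  Classical.epsilon (IntervenedVal F A I)

/-- The language L_C: atoms `Y = y`, negation, conjunction, interventionist
counterfactual operators. -/
inductive Form (S : Sig) : Type where
  | eq (Y : S.Var) (y : S.Val Y) : Form S
  | neg (φ : Form S) : Form S
  | conj (φ ψ : Form S) : Form S
  | int (I : Intervention S) (φ : Form S) : Form S

namespace Form

/-- Material implication, defined from `¬` and `∧` as usual. -/
def impl (φ ψ : Form S) : Form S := Form.neg (Form.conj φ (Form.neg ψ))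

/-- Disjunction, defined from `¬` and `∧` as usual. -/
def orF (φ ψ : Form S) : Form S := Form.neg (Form.conj (Form.neg φ) (Form.neg ψ))

/-- Biconditional. -/
def iffF (φ ψ : Form S) : Form S := Form.conj (impl φ ψ) (impl ψ φ)

end Form

/-- A canonical contradiction. -/
noncomputable def botF (S : Sig) : Form S :=
  let X : S.Var := Classical.arbitrary S.Var
  let x : S.Val X := Classical.arbitrary (S.Val X)
  Form.conj (Form.eq X x) (Form.neg (Form.eq X x))

/-- A canonical tautology. -/
noncomputable def topF (S : Sig) : Form S := Form.neg (botF S)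

/-- Disjunction of a list of formulas (the empty disjunction is a contradiction). -/
noncomputable def bigOr : List (Form S) → Form S
  | [] => botF S
  | φ :: l => l.foldl Form.orF φ

/-- Conjunction of a list of formulas (the empty conjunction is a tautology). -/
noncomputable def bigConj : List (Form S) → Form S
  | [] => topF S
  | φ :: l => l.foldl Form.conj φ

/-- `φ` is an instance of a propositional tautology: it evaluates to `true` under
every Boolean valuation that respects negation and conjunction (treating all
other formulas as atoms). -/
def Tauto (φ : Form S) : Prop :=
  ∀ v : Form S → Bool,
    (∀ ψ : Form S, v (Form.neg ψ) = !(v ψ)) →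
    (∀ ψ χ : Form S, v (Form.conj ψ χ) = (v ψ && v χ)) →
    v φ = true

/-- The assignment `[Z⃗ := z⃗, X := x]` where `Z⃗` lists all variables other than
`X` and `V`, used in the formula `X ⇝ V`. -/
def ltInt (X V : S.Var) (g : ∀ W : {W : S.Var // W ≠ X ∧ W ≠ V}, S.Val W.val)
    (x : S.Val X) : Intervention S := fun W =>
  if h : W = X then some (h.symm ▸ x)
  else if h' : W = V then none
  else some (g ⟨W, ⟨h, h'⟩⟩)

/-- The formula `X ⇝ V`: the disjunction, over tuples `z⃗` of values for all
variables other than `X` and `V`, distinct values `x₁ ≠ x₂` of `X` and distinct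
values `v₁ ≠ v₂` of `V`, of `[Z⃗:=z⃗, X:=x₁]V=v₁ ∧ [Z⃗:=z⃗, X:=x₂]V=v₂`. -/
noncomputable def leadsTo (X V : S.Var) : Form S :=
  bigOr ((Finset.univ.filter
      (fun p : (∀ W : {W : S.Var // W ≠ X ∧ W ≠ V}, S.Val W.val) ×
          (S.Val X × S.Val X) × (S.Val V × S.Val V) =>
        p.2.1.1 ≠ p.2.1.2 ∧ p.2.2.1 ≠ p.2.2.2)).toList.map
    (fun p =>
      Form.conj
        (Form.int (ltInt X V p.1 p.2.1.1) (Form.eq V p.2.2.1))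
        (Form.int (ltInt X V p.1 p.2.1.2) (Form.eq V p.2.2.2))))

/-- The chain `X₀ ⇝ X₁ ∧ ⋯ ∧ X_k ⇝ X_{k+1}`. -/
noncomputable def chainConj (X : ℕ → S.Var) : ℕ → Form S
  | 0 => leadsTo (X 0) (X 1)
  | n + 1 => Form.conj (chainConj X n) (leadsTo (X (n + 1)) (X (n + 2)))

/-- `ψ₁ → (ψ₂ → ⋯ → (ψₙ → φ))` for a list of premises. -/
def impsFrom : List (Form S) → Form S → Form S
  | [], φ => φ
  | ψ :: l, φ => Form.impl ψ (impsFrom l φ)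

/-- Satisfaction of an L_C formula in a causal model `⟨F, A⟩`. -/
def SatC : Form S → StructFuns S → Env S → Prop
  | Form.eq Y y, _, A => A Y = y
  | Form.neg φ, F, A => ¬ SatC φ F A
  | Form.conj φ ψ, F, A => SatC φ F A ∧ SatC ψ F A
  | Form.int I φ, F, A => SatC φ (intF F I) (intVal F A I)

/-- The proof system L′_C: propositional tautologies, modus ponens, and the
axiom schemes A1–A7. -/
inductive ThmC' : Form S → Prop where
  | taut : ∀ {φ : Form S}, Tauto φ → ThmC' φ
  | mp : ∀ {φ ψ : Form S}, ThmC' (Form.impl φ ψ) → ThmC' φ → ThmC' ψ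
  | a1 : ∀ (I : Intervention S) (Y : S.Var) (y y' : S.Val Y), y ≠ y' →
      ThmC' (Form.impl (Form.int I (Form.eq Y y)) (Form.neg (Form.int I (Form.eq Y y'))))
  | a2 : ∀ (I : Intervention S) (Y : S.Var),
      ThmC' (bigOr (((Finset.univ : Finset (S.Val Y)).toList).map
        (fun y => Form.int I (Form.eq Y y))))
  | a3 : ∀ (I : Intervention S) (Y Z : S.Var) (y : S.Val Y) (z : S.Val Z),
      ThmC' (Form.impl (Form.conj (Form.int I (Form.eq Y y)) (Form.int I (Form.eq Z z)))
        (Form.int (iUpd I Y y) (Form.eq Z z)))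
  | a4 : ∀ (I : Intervention S) (Y : S.Var) (y : S.Val Y),
      ThmC' (Form.int (iUpd I Y y) (Form.eq Y y))
  | a5 : ∀ (I : Intervention S) (Y Z : S.Var) (y : S.Val Y) (z : S.Val Z), Y ≠ Z →
      ThmC' (Form.impl
        (Form.conj (Form.int (iUpd I Y y) (Form.eq Z z)) (Form.int (iUpd I Z z) (Form.eq Y y)))
        (Form.int I (Form.eq Z z)))
  | a6 : ∀ (X : ℕ → S.Var) (k : ℕ),
      (∀ i : ℕ, i ≤ k → X i ≠ X (i + 1)) → X (k + 1) ≠ X 0 →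
      ThmC' (Form.impl (chainConj X k) (Form.neg (leadsTo (X (k + 1)) (X 0))))
  | a7 : ∀ (I : Intervention S) (U : S.Var) (u : S.Val U), S.exo U → I U = none →
      ThmC' (Form.iffF (Form.int (iEmpty S) (Form.eq U u)) (Form.int I (Form.eq U u)))

/-- Strong derivability from a set of premises in L′_C. -/
def ProvC' (Γ : Set (Form S)) (φ : Form S) : Prop :=
  ∃ l : List (Form S), (∀ ψ ∈ l, ψ ∈ Γ) ∧ ThmC' (impsFrom l φ)

/-- The language L′_C: Boolean combinations of formulas `[X⃗:=x⃗]Y=y`. -/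
inductive IsC' : Form S → Prop where
  | intEq : ∀ (I : Intervention S) (Y : S.Var) (y : S.Val Y),
      IsC' (Form.int I (Form.eq Y y))
  | neg : ∀ {φ : Form S}, IsC' φ → IsC' (Form.neg φ)
  | conj : ∀ {φ ψ : Form S}, IsC' φ → IsC' ψ → IsC' (Form.conj φ ψ)

/-- `Γ` is L′_C-consistent. -/
def ConsistentC' (Γ : Set (Form S)) : Prop :=
  ¬ ∃ φ : Form S, ProvC' Γ φ ∧ ProvC' Γ (Form.neg φ)

/-- `Γ` is a maximally L′_C-consistent set of L′_C formulas. -/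
def MCS (Γ : Set (Form S)) : Prop :=
  (∀ φ ∈ Γ, IsC' φ) ∧ ConsistentC' Γ ∧ ∀ φ : Form S, IsC' φ → (φ ∈ Γ ∨ Form.neg φ ∈ Γ)

/-- The assignment setting every variable other than `V` to its value under `g`. -/
def fullIntOf {V : S.Var} (g : Others S V) : Intervention S :=
  fun W => if h : W = V then none else some (g ⟨W, h⟩)

/-- The canonical structural functions of a maximally consistent set `Γ`:
`F^Γ_V(u⃗, y⃗) = v` iff `[U⃗:=u⃗, Y⃗:=y⃗]V=v ∈ Γ` (where `U⃗, Y⃗` list all variables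
other than `V`); axioms A1 and A2 make this well defined. -/
noncomputable def canonF (Γ : Set (Form S)) : StructFuns S :=
  fun V g => Classical.epsilon (fun v : S.Val V => Form.int (fullIntOf g) (Form.eq V v) ∈ Γ)

/-- The canonical valuation of a maximally consistent set `Γ`:
`A^Γ(Z) = z` iff `[]Z=z ∈ Γ`; axioms A1 and A2 make this well defined. -/
noncomputable def canonA (Γ : Set (Form S)) : Env S :=
  fun X => Classical.epsilon (fun x : S.Val X => Form.int (iEmpty S) (Form.eq X x) ∈ Γ)

section Aux
variable {S : Sig} {Γ : Set (Form S)}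

/-- A Boolean valuation respecting negation and conjunction. -/
def Resp (v : Form S → Bool) : Prop :=
  (∀ ψ : Form S, v (Form.neg ψ) = !(v ψ)) ∧
  (∀ ψ χ : Form S, v (Form.conj ψ χ) = (v ψ && v χ))

lemma Resp.impl {v : Form S → Bool} (hv : Resp v) (φ ψ : Form S) :
    v (Form.impl φ ψ) = (!(v φ) || v ψ) := by
  simp [Form.impl, hv.1, hv.2]

lemma Resp.orF {v : Form S → Bool} (hv : Resp v) (φ ψ : Form S) :
    v (Form.orF φ ψ) = (v φ || v ψ) := by
  simp [Form.orF, hv.1, hv.2]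

lemma Resp.bot {v : Form S → Bool} (hv : Resp v) : v (botF S) = false := by
  simp [botF, hv.1, hv.2]

lemma Resp.imps {v : Form S → Bool} (hv : Resp v) (l : List (Form S)) (φ : Form S) :
    v (impsFrom l φ) = true ↔ ((∀ ψ ∈ l, v ψ = true) → v φ = true) := by
  induction l with
  | nil => simp [impsFrom]
  | cons a l ih =>
    simp only [impsFrom, hv.impl, List.mem_cons]
    constructor
    · intro h hall
      rcases Bool.or_eq_true_iff.mp h with h | h
      · exact absurd (hall a (Or.inl rfl)) (by simpa using h)
      · exact ih.mp h fun ψ hψ => hall ψ (Or.inr hψ)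
    · intro h
      by_cases hva : v a = true
      · exact Bool.or_eq_true_iff.mpr (Or.inr (ih.mpr fun hall =>
          h fun ψ hψ => hψ.elim (fun e => e ▸ hva) (hall ψ)))
      · simp [hva]

lemma Resp.big {v : Form S → Bool} (hv : Resp v) (l : List (Form S)) :
    v (bigOr l) = l.any v := by
  cases l with
  | nil => simp [bigOr, hv.bot]
  | cons a l =>
    simp only [bigOr, List.any_cons]
    induction l generalizing a with
    | nil => simp
    | cons b l ih => simp [List.foldl_cons, ih, hv.orF, Bool.or_assoc]

/-- Main semantic derivability lemma: one axiom plus members semantically entail φ. -/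
lemma prov_sem (χ : Form S) (hχ : ThmC' χ) (l : List (Form S)) (hl : ∀ ψ ∈ l, ψ ∈ Γ)
    (h : ∀ v : Form S → Bool, Resp v → v χ = true → (∀ ψ ∈ l, v ψ = true) → v φ = true) :
    ProvC' Γ φ := by
  refine ⟨l, hl, ThmC'.mp (φ := χ) ?_ hχ⟩
  apply ThmC'.taut
  intro v h1 h2
  have hv : Resp v := ⟨h1, h2⟩
  rw [hv.impl, Bool.or_eq_true_iff]
  by_cases hc : v χ = true
  · exact Or.inr ((hv.imps l φ).mpr (h v hv hc))
  · simp [hc]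

lemma thm_top : ThmC' (topF S) := by
  apply ThmC'.taut
  intro v h1 h2
  have hv : Resp v := ⟨h1, h2⟩
  simp [topF, hv.1, hv.bot]

lemma prov_of_mem (hφ : φ ∈ Γ) : ProvC' Γ φ :=
  prov_sem (topF S) thm_top [φ] (by simpa using hφ)
    (fun v hv _ h => h φ (by simp))

lemma mcs_not_both (hΓ : MCS Γ) (hφ : φ ∈ Γ) (hn : Form.neg φ ∈ Γ) : False :=
  hΓ.2.1 ⟨φ, prov_of_mem hφ, prov_of_mem hn⟩

lemma mcs_mem_of_prov (hΓ : MCS Γ) (hφ : IsC' φ) (h : ProvC' Γ φ) : φ ∈ Γ := by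
  rcases hΓ.2.2 φ hφ with h' | h'
  · exact h'
  · exact absurd ⟨φ, h, prov_of_mem h'⟩ hΓ.2.1

lemma mcs_conj_mem (hΓ : MCS Γ) (hφ : φ ∈ Γ) (hψ : ψ ∈ Γ) : Form.conj φ ψ ∈ Γ := by
  apply mcs_mem_of_prov hΓ (IsC'.conj (hΓ.1 φ hφ) (hΓ.1 ψ hψ))
  exact prov_sem (topF S) thm_top [φ, ψ] (by simp [hφ, hψ])
    (fun v hv _ h => by simp [hv.2, h φ (by simp), h ψ (by simp)])

end Aux

section Atoms
variable {S : Sig} {Γ : Set (Form S)}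

lemma mcs_atom_exists (hΓ : MCS Γ) (I : Intervention S) (Y : S.Var) :
    ∃ y : S.Val Y, Form.int I (Form.eq Y y) ∈ Γ := by
  by_contra h
  push_neg at h
  have hneg : ∀ y : S.Val Y, Form.neg (Form.int I (Form.eq Y y)) ∈ Γ := fun y => by
    rcases hΓ.2.2 _ (IsC'.intEq I Y y) with h' | h'
    · exact absurd h' (h y)
    · exact h'
  set l : List (Form S) :=
    ((Finset.univ : Finset (S.Val Y)).toList).map (fun y => Form.int I (Form.eq Y y)) with hl
  apply hΓ.2.1
  refine ⟨bigOr l, ⟨[], by simp, ThmC'.a2 I Y⟩, ?_⟩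
  apply prov_sem (bigOr l) (ThmC'.a2 I Y) (l.map Form.neg)
    (by
      intro ψ hψ
      simp only [hl, List.map_map, List.mem_map] at hψ
      rcases hψ with ⟨y, _, rfl⟩
      exact hneg y)
  intro v hv hb hall
  rw [hv.big] at hb
  rcases List.any_eq_true.mp hb with ⟨ψ, hψ, hvψ⟩
  have := hall (Form.neg ψ) (List.mem_map_of_mem hψ)
  rw [hv.1] at this
  simp [hvψ] at this

lemma mcs_atom_unique (hΓ : MCS Γ) {I : Intervention S} {Y : S.Var} {y y' : S.Val Y}
    (h : Form.int I (Form.eq Y y) ∈ Γ) (h' : Form.int I (Form.eq Y y') ∈ Γ) : y = y' := by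
  by_contra hne
  apply hΓ.2.1
  refine ⟨Form.int I (Form.eq Y y'), prov_of_mem h', ?_⟩
  exact prov_sem _ (ThmC'.a1 I Y y y' hne) [Form.int I (Form.eq Y y)] (by simpa using h)
    (fun v hv hax hall => by
      have h1 := hall (Form.int I (Form.eq Y y)) (by simp)
      rw [hv.impl, hv.1, h1] at hax
      rw [hv.1]
      simpa using hax)

/-- The canonical value of `Z` under intervention `I`. -/
noncomputable def BVal (hΓ : MCS Γ) (I : Intervention S) : Env S :=
  fun Z => Classical.choose (mcs_atom_exists hΓ I Z)

lemma BVal_spec (hΓ : MCS Γ) (I : Intervention S) (Z : S.Var) :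
    Form.int I (Form.eq Z (BVal hΓ I Z)) ∈ Γ :=
  Classical.choose_spec (mcs_atom_exists hΓ I Z)

lemma BVal_eq_iff (hΓ : MCS Γ) {I : Intervention S} {Z : S.Var} {z : S.Val Z} :
    Form.int I (Form.eq Z z) ∈ Γ ↔ BVal hΓ I Z = z :=
  ⟨fun h => mcs_atom_unique hΓ (BVal_spec hΓ I Z) h,
   fun h => h ▸ BVal_spec hΓ I Z⟩

lemma canonF_spec (hΓ : MCS Γ) (V : S.Var) (g : Others S V) :
    Form.int (fullIntOf g) (Form.eq V (canonF Γ V g)) ∈ Γ :=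
  Classical.epsilon_spec (mcs_atom_exists hΓ (fullIntOf g) V)

lemma canonF_eq_iff (hΓ : MCS Γ) {V : S.Var} {g : Others S V} {v : S.Val V} :
    Form.int (fullIntOf g) (Form.eq V v) ∈ Γ ↔ canonF Γ V g = v :=
  ⟨fun h => mcs_atom_unique hΓ (canonF_spec hΓ V g) h,
   fun h => h ▸ canonF_spec hΓ V g⟩

lemma canonA_spec (hΓ : MCS Γ) (X : S.Var) :
    Form.int (iEmpty S) (Form.eq X (canonA Γ X)) ∈ Γ :=
  Classical.epsilon_spec (mcs_atom_exists hΓ (iEmpty S) X)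

end Atoms

section Witness
variable {S : Sig} {Γ : Set (Form S)}

lemma BVal_of_int (hΓ : MCS Γ) {I : Intervention S} {X : S.Var} {v : S.Val X}
    (h : I X = some v) : BVal hΓ I X = v := by
  rw [← BVal_eq_iff hΓ]
  have hIu : iUpd I X v = I := by
    funext W
    by_cases hw : W = X
    · subst hw; simp [iUpd, h]
    · simp [iUpd, Function.update_of_ne hw]
  have := ThmC'.a4 (S := S) I X v
  rw [hIu] at this
  exact mcs_mem_of_prov hΓ (IsC'.intEq _ _ _) ⟨[], by simp, this⟩

lemma BVal_exo_none (hΓ : MCS Γ) {I : Intervention S} {X : S.Var}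
    (hexo : S.exo X) (h : I X = none) : BVal hΓ I X = canonA Γ X := by
  rw [← BVal_eq_iff hΓ]
  apply mcs_mem_of_prov hΓ (IsC'.intEq _ _ _)
  apply prov_sem _ (ThmC'.a7 I X (canonA Γ X) hexo h) [Form.int (iEmpty S) (Form.eq X (canonA Γ X))]
    (by simpa using canonA_spec hΓ X)
  intro v hv hax hall
  have h1 := hall (Form.int (iEmpty S) (Form.eq X (canonA Γ X))) (by simp)
  simp only [Form.iffF, hv.2, hv.impl, h1, Bool.and_eq_true, Bool.or_eq_true_iff] at hax
  rcases hax.1 with hx | hx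
  · simp [hv.1, h1] at hx
  · exact hx

/-- A3 chaining: folding interventions that agree with the canonical values of `I`. -/
lemma chain_mem (hΓ : MCS Γ) (I : Intervention S) (f : Env S)
    (hf : ∀ Z : S.Var, Form.int I (Form.eq Z (f Z)) ∈ Γ) (l : List S.Var) :
    ∀ Z : S.Var, Form.int (l.foldl (fun J W => iUpd J W (f W)) I) (Form.eq Z (f Z)) ∈ Γ := by
  induction l generalizing I with
  | nil => exact hf
  | cons a l ih =>
    intro Z
    simp only [List.foldl_cons]
    apply ih
    · intro W
      apply mcs_mem_of_prov hΓ (IsC'.intEq _ _ _)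
      apply prov_sem _ (ThmC'.a3 I a W (f a) (f W))
        [Form.int I (Form.eq a (f a)), Form.int I (Form.eq W (f W))]
        (by simp [hf a, hf W])
      intro v hv hax hall
      have h1 := hall (Form.int I (Form.eq a (f a))) (by simp)
      have h2 := hall (Form.int I (Form.eq W (f W))) (by simp)
      simp only [hv.impl, hv.2, h1, h2, Bool.and_self, Bool.not_true, Bool.false_or] at hax
      exact hax

lemma fold_apply (I : Intervention S) (f : Env S) (l : List S.Var) (W : S.Var) :
    (l.foldl (fun J W => iUpd J W (f W)) I) W = if W ∈ l then some (f W) else I W := by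
  induction l generalizing I with
  | nil => simp
  | cons a l ih =>
    simp only [List.foldl_cons, ih, List.mem_cons]
    by_cases hw : W ∈ l
    · simp [hw]
    · by_cases ha : W = a
      · subst ha; simp [hw, iUpd]
      · simp [hw, ha, iUpd, Function.update_of_ne ha]

lemma BVal_witness (hΓ : MCS Γ) (I : Intervention S) :
    IntervenedVal (canonF Γ) (canonA Γ) I (BVal hΓ I) := by
  refine ⟨fun X _ v h => BVal_of_int hΓ h, fun X hexo h => BVal_exo_none hΓ hexo h, ?_⟩
  intro V hV
  cases hIV : I V with
  | some v => rw [BVal_of_int hΓ hIV]; simp [intF, hIV]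
  | none =>
    simp only [intF, hIV, Option.getD_none]
    symm
    rw [← canonF_eq_iff hΓ]
    have key := chain_mem hΓ I (BVal hΓ I) (BVal_spec hΓ I)
      ((Finset.univ.filter (fun W => W ≠ V)).toList) V
    convert key using 2
    funext W
    rw [fold_apply]
    by_cases hw : W = V
    · subst hw; simp [fullIntOf, hIV]
    · simp [fullIntOf, hw, Env.restrict]

end Witness

section Recursive
variable {S : Sig} {Γ : Set (Form S)}

lemma isC'_bigOr {l : List (Form S)} (hne : l ≠ []) (h : ∀ ψ ∈ l, IsC' ψ) :
    IsC' (bigOr l) := by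
  cases l with
  | nil => exact absurd rfl hne
  | cons a l =>
    simp only [bigOr]
    induction l generalizing a with
    | nil => exact h a (by simp)
    | cons b l ih =>
      simp only [List.foldl_cons]
      refine ih (Form.orF a b) (by simp) (fun ψ hψ => ?_)
      rcases List.mem_cons.mp hψ with rfl | hψ
      · exact IsC'.neg (IsC'.conj (IsC'.neg (h a (by simp))) (IsC'.neg (h b (by simp))))
      · exact h ψ (by simp [hψ])

lemma bigOr_mem (hΓ : MCS Γ) {l : List (Form S)} {φ : Form S} (hφl : φ ∈ l)
    (hIs : ∀ ψ ∈ l, IsC' ψ) (hφ : φ ∈ Γ) : bigOr l ∈ Γ := by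
  apply mcs_mem_of_prov hΓ (isC'_bigOr (by rintro rfl; simp at hφl) hIs)
  apply prov_sem (topF S) thm_top [φ] (by simpa using hφ)
  intro v hv _ hall
  rw [hv.big]
  exact List.any_eq_true.mpr ⟨φ, hφl, hall φ (by simp)⟩

lemma leadsTo_mem (hΓ : MCS Γ) {X V : S.Var} (h : DirAff (canonF Γ) X V) :
    leadsTo X V ∈ Γ := by
  obtain ⟨hV, hXV, g, x₁, x₂, hx, hne⟩ := h
  set v₁ := canonF Γ V (Function.update g ⟨X, hXV⟩ x₁) with hv₁
  set v₂ := canonF Γ V (Function.update g ⟨X, hXV⟩ x₂) with hv₂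
  have hfull : ∀ x : S.Val X,
      fullIntOf (Function.update g ⟨X, hXV⟩ x) =
        ltInt X V (fun W => g ⟨W.1, W.2.2⟩) x := by
    intro x
    funext W
    by_cases hw : W = V
    · subst hw; simp [fullIntOf, ltInt, Ne.symm hXV]
    · by_cases hwx : W = X
      · subst hwx
        simp [fullIntOf, ltInt, hw]
      · simp only [fullIntOf, hw, dite_false, ltInt, hwx, dif_neg hwx, dif_neg hw]
        congr 1
        exact Function.update_of_ne (fun he => hwx (congrArg Subtype.val he)) _ _
  have h₁ : Form.int (ltInt X V (fun W => g ⟨W.1, W.2.2⟩) x₁) (Form.eq V v₁) ∈ Γ := by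
    rw [← hfull]; exact canonF_spec hΓ V _
  have h₂ : Form.int (ltInt X V (fun W => g ⟨W.1, W.2.2⟩) x₂) (Form.eq V v₂) ∈ Γ := by
    rw [← hfull]; exact canonF_spec hΓ V _
  set p : (∀ W : {W : S.Var // W ≠ X ∧ W ≠ V}, S.Val W.val) ×
      (S.Val X × S.Val X) × (S.Val V × S.Val V) :=
    ⟨fun W => g ⟨W.1, W.2.2⟩, (x₁, x₂), (v₁, v₂)⟩ with hp
  have hpmem : p ∈ (Finset.univ.filter
      (fun p : (∀ W : {W : S.Var // W ≠ X ∧ W ≠ V}, S.Val W.val) ×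
          (S.Val X × S.Val X) × (S.Val V × S.Val V) =>
        p.2.1.1 ≠ p.2.1.2 ∧ p.2.2.1 ≠ p.2.2.2)) := by
    simp [hp, hx, hne]
  unfold leadsTo
  apply bigOr_mem hΓ (φ := Form.conj
        (Form.int (ltInt X V p.1 p.2.1.1) (Form.eq V p.2.2.1))
        (Form.int (ltInt X V p.1 p.2.1.2) (Form.eq V p.2.2.2)))
  · exact List.mem_map_of_mem (Finset.mem_toList.mpr hpmem)
  · intro ψ hψ
    rcases List.mem_map.mp hψ with ⟨q, _, rfl⟩
    exact IsC'.conj (IsC'.intEq _ _ _) (IsC'.intEq _ _ _)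
  · exact mcs_conj_mem hΓ h₁ h₂

end Recursive

section Rec2
variable {S : Sig} {Γ : Set (Form S)}

lemma transGen_path {α : Type*} {r : α → α → Prop} {a b : α} (h : Relation.TransGen r a b) :
    ∃ (m : ℕ) (X : ℕ → α), 0 < m ∧ X 0 = a ∧ X m = b ∧ ∀ i < m, r (X i) (X (i + 1)) := by
  induction h with
  | @single c hab =>
    exact ⟨1, fun i => if i = 0 then a else c, by omega, by simp, by simp, by
      intro i hi
      interval_cases i
      simpa using hab⟩
  | @tail c d hab hbc ih =>
    obtain ⟨m, X, hm, h0, hb, hedge⟩ := ih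
    refine ⟨m + 1, fun i => if i ≤ m then X i else d, by omega, by simp [hm.le, h0], by simp, ?_⟩
    intro i hi
    by_cases him : i < m
    · simpa [him.le, Nat.succ_le_of_lt him] using hedge i him
    · have : i = m := by omega
      subst this
      simpa [hb] using hbc

lemma canonF_recursive (hΓ : MCS Γ) : RecursiveF (canonF Γ : StructFuns S) := by
  intro a b hab hba
  have hcyc : Relation.TransGen (DirAff (canonF Γ)) a a := hab.trans hba
  obtain ⟨m, X, hm, h0, hb, hedge⟩ := transGen_path hcyc
  have hne : ∀ i, i < m → X i ≠ X (i + 1) := fun i hi => (hedge i hi).2.choose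
  by_cases hm1 : m = 1
  · subst hm1
    exact hne 0 (by omega) (by rw [h0, hb])
  have hm2 : 2 ≤ m := by omega
  set k := m - 2 with hk
  have hk1 : k + 1 = m - 1 := by omega
  have hk2 : (k + 1) + 1 = m := by omega
  have hchain : ∀ n, n ≤ k → chainConj X n ∈ Γ := by
    intro n hn
    induction n with
    | zero => exact leadsTo_mem hΓ (hedge 0 (by omega))
    | succ n ih =>
      exact mcs_conj_mem hΓ (ih (by omega)) (leadsTo_mem hΓ (hedge (n + 1) (by omega)))
  have hlast : leadsTo (X (k + 1)) (X 0) ∈ Γ := by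
    have := leadsTo_mem hΓ (hedge (k + 1) (by omega))
    rwa [hk2, hb, ← h0] at this
  have hX0 : X (k + 1) ≠ X 0 := by
    have := hne (k + 1) (by omega)
    rwa [hk2, hb, ← h0] at this
  apply hΓ.2.1
  refine ⟨leadsTo (X (k + 1)) (X 0), prov_of_mem hlast, ?_⟩
  apply prov_sem _ (ThmC'.a6 X k (fun i hi => hne i (by omega)) hX0) [chainConj X k]
    (by simpa using hchain k le_rfl)
  intro v hv hax hall
  have h1 := hall (chainConj X k) (by simp)
  rw [hv.impl, h1] at hax
  simpa using hax

end Rec2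

section Unique
variable {S : Sig}

lemma hybrid {F : StructFuns S} {V : S.Var} (hV : ¬ S.exo V) :
    ∀ (n : ℕ) (g g' : Others S V),
      (Finset.univ.filter (fun W => g W ≠ g' W)).card ≤ n →
      F V g ≠ F V g' →
      ∃ W : {X : S.Var // X ≠ V}, g W ≠ g' W ∧ DirAff F W.1 V := by
  intro n
  induction n with
  | zero =>
    intro g g' hcard hne
    exfalso
    apply hne
    congr 1
    funext W
    by_contra hW
    have : W ∈ Finset.univ.filter (fun W => g W ≠ g' W) := by simp [hW]
    have := Finset.card_pos.mpr ⟨W, this⟩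
    omega
  | succ n ih =>
    intro g g' hcard hne
    have hdiff : ∃ W₀, g W₀ ≠ g' W₀ := by
      by_contra h
      push_neg at h
      exact hne (by congr 1; funext W; exact h W)
    obtain ⟨W₀, hW₀⟩ := hdiff
    set g₁ := Function.update g W₀ (g' W₀) with hg₁
    by_cases hF : F V g₁ = F V g
    · -- recurse on (g₁, g')
      have hne' : F V g₁ ≠ F V g' := by rw [hF]; exact hne
      have hsub : Finset.univ.filter (fun W => g₁ W ≠ g' W) ⊆
          (Finset.univ.filter (fun W => g W ≠ g' W)).erase W₀ := by
        intro W hW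
        simp only [Finset.mem_filter, Finset.mem_univ, true_and] at hW
        have hWW₀ : W ≠ W₀ := by
          rintro rfl
          exact hW (by simp [hg₁])
        refine Finset.mem_erase.mpr ⟨hWW₀, ?_⟩
        simp only [Finset.mem_filter, Finset.mem_univ, true_and]
        rwa [hg₁, Function.update_of_ne hWW₀] at hW
      have hW₀mem : W₀ ∈ Finset.univ.filter (fun W => g W ≠ g' W) := by simp [hW₀]
      have hcard' : (Finset.univ.filter (fun W => g₁ W ≠ g' W)).card ≤ n := by
        have := Finset.card_le_card hsub
        have := Finset.card_erase_of_mem hW₀mem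
        omega
      obtain ⟨W, hWne, hWaff⟩ := ih g₁ g' hcard' hne'
      have hWW₀ : W ≠ W₀ := by
        rintro rfl
        exact hWne (by simp [hg₁])
      refine ⟨W, ?_, hWaff⟩
      rwa [hg₁, Function.update_of_ne hWW₀] at hWne
    · -- W₀ is a direct cause
      refine ⟨W₀, hW₀, hV, W₀.2, g, g W₀, g' W₀, hW₀, ?_⟩
      have h1 : Function.update g (⟨W₀.1, W₀.2⟩ : {X : S.Var // X ≠ V}) (g W₀) = g :=
        Function.update_eq_self _ _
      have h2 : Function.update g (⟨W₀.1, W₀.2⟩ : {X : S.Var // X ≠ V}) (g' W₀) = g₁ := rfl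
      rw [h1, h2]
      exact fun h => hF h.symm

lemma dirAff_intF {F : StructFuns S} {I : Intervention S} {X V : S.Var}
    (h : DirAff (intF F I) X V) : DirAff F X V := by
  obtain ⟨hV, hXV, g, x₁, x₂, hx, hne⟩ := h
  cases hIV : I V with
  | some v => simp [intF, hIV] at hne
  | none => exact ⟨hV, hXV, g, x₁, x₂, hx, by simpa [intF, hIV] using hne⟩

lemma intervenedVal_unique {F : StructFuns S} (hrec : RecursiveF F) {A : Env S}
    {I : Intervention S} {A' A'' : Env S}
    (h1 : IntervenedVal F A I A') (h2 : IntervenedVal F A I A'') : A' = A'' := by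
  by_contra hne
  set r : S.Var → S.Var → Prop := Relation.TransGen (DirAff (intF F I)) with hr
  haveI : IsTrans S.Var r := ⟨fun _ _ _ => Relation.TransGen.trans⟩
  haveI : IsIrrefl S.Var r := ⟨fun a ha =>
    hrec a a (Relation.TransGen.mono (fun _ _ => dirAff_intF) _ _ ha)
      (Relation.TransGen.mono (fun _ _ => dirAff_intF) _ _ ha)⟩
  have hwf : WellFounded r := Finite.wellFounded_of_trans_of_irrefl r
  set s : Set S.Var := {V | A' V ≠ A'' V} with hs
  have hsne : s.Nonempty := by
    rcases Function.ne_iff.mp hne with ⟨V, hVne⟩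
    exact ⟨V, hVne⟩
  set V := hwf.min s hsne with hV
  have hmem : V ∈ s := hwf.min_mem s hsne
  have hnlt : ∀ W ∈ s, ¬ r W V := fun W hW => hwf.not_lt_min s hW
  have hVendo : ¬ S.exo V := by
    intro hexo
    apply hmem
    cases hIV : I V with
    | some v => rw [h1.1 V hexo v hIV, h2.1 V hexo v hIV]
    | none => rw [h1.2.1 V hexo hIV, h2.2.1 V hexo hIV]
  have hd : intF F I V (A'.restrict V) ≠ intF F I V (A''.restrict V) := by
    rw [← h1.2.2 V hVendo, ← h2.2.2 V hVendo]
    exact hmem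
  obtain ⟨W, hWne, hWaff⟩ := hybrid (F := intF F I) hVendo
    ((Finset.univ.filter (fun W => (A'.restrict V) W ≠ (A''.restrict V) W)).card)
    (A'.restrict V) (A''.restrict V) le_rfl hd
  exact hnlt W.1 hWne (Relation.TransGen.single hWaff)

end Unique

/-- Theorem (canonical truth lemma for atoms): `[X⃗:=x⃗]Y=y ∈ Γ` iff the canonical
model `⟨F^Γ, A^Γ⟩` satisfies `[X⃗:=x⃗]Y=y`, i.e. iff the valuation obtained by
intervening with `[X⃗:=x⃗]` on `⟨F^Γ, A^Γ⟩` assigns `y` to `Y`. -/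
theorem canonical_truth_lemma_atoms (S : Sig) (Γ : Set (Form S)) (hΓ : MCS Γ)
    (I : Intervention S) (Y : S.Var) (y : S.Val Y) :
    Form.int I (Form.eq Y y) ∈ Γ ↔
      SatC (Form.int I (Form.eq Y y)) (canonF Γ) (canonA Γ) := by
  have hB := BVal_witness hΓ I
  have hex : IntervenedVal (canonF Γ) (canonA Γ) I (intVal (canonF Γ) (canonA Γ) I) :=
    Classical.epsilon_spec ⟨BVal hΓ I, hB⟩
  have heq : intVal (canonF Γ) (canonA Γ) I = BVal hΓ I :=
    intervenedVal_unique (canonF_recursive hΓ) hex hB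
  simp only [SatC, heq]
  exact BVal_eq_iff hΓ
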